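/- arXiv:1409.6259 — 3 statements merged into one kernel-verified Lean document; each statement's English description precedes it below -/
import Mathlib

section
/- Let A ∈ GL(2,ℂ) with |det A| = 1 and ‖A‖ > 1, let S be the most-contracted line of A (the eigenspace of A*A with eigenvalue ‖A‖⁻²), and let V be a complex line in ℂ² with ‖Av‖ = R‖v‖ for v ∈ V. Then the angle θ between V and S satisfies √((R² − ‖A‖⁻²)/(‖A‖² − ‖A‖⁻²)) ≤ θ ≤ (π/2)·√((R² − ‖A‖⁻²)/(‖A‖² − ‖A‖⁻²)). -/
open Matrix

set_option maxHeartbeats 1000000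

noncomputable section

abbrev E2 := EuclideanSpace ℂ (Fin 2)

noncomputable def opNorm (M : Matrix (Fin 2) (Fin 2) ℂ) : ℝ :=
  ‖Matrix.toEuclideanCLM (𝕜 := ℂ) (n := Fin 2) M‖

noncomputable def mulV (M : Matrix (Fin 2) (Fin 2) ℂ) (v : E2) : E2 :=
  Matrix.toEuclideanCLM (𝕜 := ℂ) (n := Fin 2) M v

/-- The most-contracted line of `A`: the eigenspace of `A*A` corresponding to the
eigenvalue `‖A‖⁻²`. -/
noncomputable def Sline (A : Matrix (Fin 2) (Fin 2) ℂ) : Submodule ℂ E2 :=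
  Module.End.eigenspace
    ((Matrix.toEuclideanCLM (𝕜 := ℂ) (n := Fin 2) (Aᴴ * A)).toLinearMap)
    ((((opNorm A) ^ 2)⁻¹ : ℝ) : ℂ)

lemma det_toEuclideanLin (M : Matrix (Fin 2) (Fin 2) ℂ) :
    LinearMap.det (Matrix.toEuclideanLin (𝕜 := ℂ) (n := Fin 2) (m := Fin 2) M) = M.det := by
  rw [Matrix.toEuclideanLin_eq_toLin, LinearMap.det_toLin]

/-- if `‖Av‖ = R ‖v‖` on a complex line `V`, then the angle
`θ = ∠(V, S)` to the most contracted line `S` of `A` satisfies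
`√((R² − ‖A‖⁻²)/(‖A‖² − ‖A‖⁻²)) ≤ θ ≤ (π/2) √((R² − ‖A‖⁻²)/(‖A‖² − ‖A‖⁻²))`. -/
theorem angle_to_contracted_line (A : Matrix (Fin 2) (Fin 2) ℂ)
    (hdet : ‖A.det‖ = 1) (hnorm : 1 < opNorm A)
    (V : Submodule ℂ E2) (hV : Module.finrank ℂ V = 1)
    (R : ℝ) (hR : ∀ v ∈ V, ‖mulV A v‖ = R * ‖v‖)
    (θ : ℝ)
    (hθ : ∀ v ∈ V, ∀ s ∈ Sline A, ‖v‖ = 1 → ‖s‖ = 1 →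
      θ = Real.arccos (‖inner (𝕜 := ℂ) v s‖)) :
    Real.sqrt ((R ^ 2 - ((opNorm A) ^ 2)⁻¹) / ((opNorm A) ^ 2 - ((opNorm A) ^ 2)⁻¹))
      ≤ θ ∧
    θ ≤ (Real.pi / 2) *
      Real.sqrt ((R ^ 2 - ((opNorm A) ^ 2)⁻¹) / ((opNorm A) ^ 2 - ((opNorm A) ^ 2)⁻¹)) := by

  classical
  set T := Matrix.toEuclideanCLM (𝕜 := ℂ) (n := Fin 2) A with hT
  set B := star T * T with hBdef
  have hBA : Matrix.toEuclideanCLM (𝕜 := ℂ) (n := Fin 2) (Aᴴ * A) = B := by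
    rw [_root_.map_mul, ← Matrix.star_eq_conjTranspose, map_star]
  have hBsa : IsSelfAdjoint B := IsSelfAdjoint.star_mul_self T
  have hsym : (B : E2 →ₗ[ℂ] E2).IsSymmetric :=
    (ContinuousLinearMap.isSelfAdjoint_iff_isSymmetric.mp hBsa)
  have hrank : Module.finrank ℂ E2 = 2 := finrank_euclideanSpace_fin
  set b := hsym.eigenvectorBasis hrank with hb
  set μ := hsym.eigenvalues hrank with hμ
  have hM : opNorm A = ‖T‖ := rfl
  -- determinant: product of eigenvalues = 1
  have hdetB : (Aᴴ * A).det = ∏ i, (μ i : ℂ) := by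
    have hmat : LinearMap.toMatrix b.toBasis b.toBasis (B : E2 →ₗ[ℂ] E2)
        = Matrix.diagonal (fun i => (μ i : ℂ)) := by
      ext i j
      rw [LinearMap.toMatrix_apply, OrthonormalBasis.coe_toBasis,
        hsym.apply_eigenvectorBasis hrank j, _root_.map_smul]
      rcases eq_or_ne i j with h | h
      · simp [h, ← OrthonormalBasis.coe_toBasis, Module.Basis.repr_self,
          Matrix.diagonal_apply, Finsupp.single_apply, hμ, hb]
      · simp [h, h.symm, ← OrthonormalBasis.coe_toBasis, Module.Basis.repr_self,
          Matrix.diagonal_apply, Finsupp.single_apply, hμ, hb]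
    rw [← det_toEuclideanLin, ← Matrix.coe_toEuclideanCLM_eq_toEuclideanLin, hBA,
      ← LinearMap.det_toMatrix b.toBasis, hmat, Matrix.det_diagonal]
  have hprod : μ 0 * μ 1 = 1 := by
    have h1 : (Aᴴ * A).det = ((‖A.det‖ : ℝ) : ℂ) ^ 2 := by
      rw [Matrix.det_mul, Matrix.det_conjTranspose]
      rw [Complex.star_def, ← Complex.normSq_eq_conj_mul_self, Complex.normSq_eq_norm_sq]
      push_cast
      ring
    rw [hdet] at h1
    have h2 := hdetB.symm.trans h1
    rw [Fin.prod_univ_two] at h2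
    norm_num at h2
    exact_mod_cast h2
  -- eigenvalue bounds
  have hμ_eq : ∀ i, (μ i : ℝ) = ‖T (b i)‖ ^ 2 := by
    intro i
    have h1 : (B : E2 →ₗ[ℂ] E2) (b i) = (μ i : ℂ) • b i :=
      hsym.apply_eigenvectorBasis hrank i
    have h2 : (inner ℂ (b i) (B (b i)) : ℂ) = (μ i : ℂ) := by
      rw [show B (b i) = (B : E2 →ₗ[ℂ] E2) (b i) from rfl, h1, inner_smul_right,
        inner_self_eq_norm_sq_to_K, (b.orthonormal.1 i)]
      norm_num
    have h3 : (inner ℂ (b i) (B (b i)) : ℂ) = (‖T (b i)‖ ^ 2 : ℝ) := by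
      rw [hBdef]
      rw [ContinuousLinearMap.mul_apply, ContinuousLinearMap.star_eq_adjoint,
        ContinuousLinearMap.adjoint_inner_right, inner_self_eq_norm_sq_to_K]
      norm_cast
    have h4 := h2.symm.trans h3
    exact_mod_cast h4
  have hμ_nonneg : ∀ i, 0 ≤ μ i := fun i => by rw [hμ_eq i]; positivity
  have hμ_le : ∀ i, μ i ≤ ‖T‖ ^ 2 := by
    intro i
    rw [hμ_eq i]
    have h1 : ‖T (b i)‖ ≤ ‖T‖ * ‖b i‖ := T.le_opNorm _
    rw [b.orthonormal.1 i] at h1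
    nlinarith [norm_nonneg (T (b i)), norm_nonneg T]
  have hBnorm : ‖B‖ = ‖T‖ ^ 2 := by
    rw [hBdef, ContinuousLinearMap.star_eq_adjoint,
      show ContinuousLinearMap.adjoint T * T = ContinuousLinearMap.adjoint T ∘L T from rfl,
      ContinuousLinearMap.norm_adjoint_comp_self]
    ring
  have hBle : ‖B‖ ≤ max (μ 0) (μ 1) := by
    have hmax0 : 0 ≤ max (μ 0) (μ 1) := le_max_of_le_left (hμ_nonneg 0)
    apply ContinuousLinearMap.opNorm_le_bound _ hmax0
    intro x
    have hre : ∀ i, b.repr (B x) i = μ i * b.repr x i := fun i =>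
      hsym.eigenvectorBasis_apply_self_apply hrank x i
    have h1 : ‖B x‖ ^ 2 ≤ (max (μ 0) (μ 1)) ^ 2 * ‖x‖ ^ 2 := by
      rw [← b.repr.norm_map (B x), ← b.repr.norm_map x]
      rw [EuclideanSpace.norm_eq, EuclideanSpace.norm_eq]
      rw [Real.sq_sqrt (Finset.sum_nonneg fun i _ => sq_nonneg _),
        Real.sq_sqrt (Finset.sum_nonneg fun i _ => sq_nonneg _)]
      rw [Finset.mul_sum]
      apply Finset.sum_le_sum
      intro i _
      rw [hre i, norm_mul]
      have h5 : ‖(μ i : ℂ)‖ ≤ max (μ 0) (μ 1) := by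
        rw [Complex.norm_real, Real.norm_eq_abs, abs_of_nonneg (hμ_nonneg i)]
        fin_cases i
        · exact le_max_left _ _
        · exact le_max_right _ _
      have h6 : ‖(μ i : ℂ)‖ ^ 2 ≤ (μ 0 ⊔ μ 1) ^ 2 := by
        nlinarith [norm_nonneg ((μ i : ℂ))]
      nlinarith [sq_nonneg (‖b.repr x i‖), sq_nonneg (‖(μ i : ℂ)‖ * ‖b.repr x i‖)]
    nlinarith [norm_nonneg (B x), norm_nonneg x, mul_nonneg hmax0 (norm_nonneg x)]
  have hT1 : 1 < ‖T‖ := by rwa [hM] at hnorm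
  have hmax_eq : max (μ 0) (μ 1) = ‖T‖ ^ 2 :=
    le_antisymm (max_le (hμ_le 0) (hμ_le 1)) (hBnorm ▸ hBle)
  obtain ⟨j, k, hjk, hμj, hμk⟩ :
      ∃ j k : Fin 2, j ≠ k ∧ μ j = (‖T‖ ^ 2)⁻¹ ∧ μ k = ‖T‖ ^ 2 := by
    rcases max_choice (μ 0) (μ 1) with h1 | h1
    · have h0 : μ 0 = ‖T‖ ^ 2 := h1 ▸ hmax_eq
      refine ⟨1, 0, by decide, ?_, h0⟩
      exact eq_inv_of_mul_eq_one_left (by rw [← h0, mul_comm]; exact hprod)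
    · have h0 : μ 1 = ‖T‖ ^ 2 := h1 ▸ hmax_eq
      refine ⟨0, 1, by decide, ?_, h0⟩
      exact eq_inv_of_mul_eq_one_left (by rw [← h0]; exact hprod)
  -- the eigenvector `b j` is a unit vector of `Sline A`
  have hSline : Sline A
      = Module.End.eigenspace (B : E2 →ₗ[ℂ] E2) (((‖T‖ ^ 2)⁻¹ : ℝ) : ℂ) := by
    rw [Sline, hBA, hM]
  have hsj : b j ∈ Sline A := by
    rw [hSline, ← hμj]
    exact (hsym.hasEigenvector_eigenvectorBasis hrank j).1
  have hbj1 : ‖b j‖ = 1 := b.orthonormal.1 j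
  -- a unit vector of V
  have hVne : V ≠ ⊥ := by
    intro h
    rw [h, finrank_bot] at hV
    norm_num at hV
  obtain ⟨x0, hx0V, hx0⟩ := (Submodule.ne_bot_iff V).mp hVne
  have hx0n : ‖x0‖ ≠ 0 := norm_ne_zero_iff.mpr hx0
  set v : E2 := ((‖x0‖⁻¹ : ℝ) : ℂ) • x0 with hv
  have hvV : v ∈ V := V.smul_mem _ hx0V
  have hv1 : ‖v‖ = 1 := by
    rw [hv, norm_smul, Complex.norm_real, Real.norm_eq_abs,
      abs_of_nonneg (by positivity), inv_mul_cancel₀ hx0n]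
  -- coordinates of v
  set c : Fin 2 → ℂ := fun i => b.repr v i with hc
  have hsum1 : ∑ i, ‖c i‖ ^ 2 = 1 := by
    have h1 : ‖b.repr v‖ = ‖v‖ := b.repr.norm_map v
    rw [EuclideanSpace.norm_eq, hv1] at h1
    have h2 : Real.sqrt (∑ i, ‖b.repr v i‖ ^ 2) ^ 2 = 1 := by rw [h1]; norm_num
    rwa [Real.sq_sqrt (Finset.sum_nonneg fun i _ => sq_nonneg _)] at h2
  have hRv : ‖T v‖ = R := by
    have h1 := hR v hvV
    rw [hv1, mul_one] at h1
    exact h1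
  -- Parseval: R² = ∑ μᵢ ‖cᵢ‖²
  have hterm : ∀ i : Fin 2, (starRingEnd ℂ) (c i) * ((μ i : ℂ) * c i)
      = ((μ i * ‖c i‖ ^ 2 : ℝ) : ℂ) := by
    intro i
    have h1 : ((‖c i‖ ^ 2 : ℝ) : ℂ) = (starRingEnd ℂ) (c i) * c i := by
      rw [← Complex.normSq_eq_conj_mul_self]
      norm_cast
      rw [← Complex.sq_norm]
    push_cast
    rw [show ((‖c i‖ : ℂ)) ^ 2 = (starRingEnd ℂ) (c i) * c i by exact_mod_cast h1]
    ring
  have hinner : (inner ℂ v (B v) : ℂ) = ((∑ i, μ i * ‖c i‖ ^ 2 : ℝ) : ℂ) := by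
    have hre2 : ∀ i, b.repr (B v) i = (μ i : ℂ) * c i := fun i =>
      hsym.eigenvectorBasis_apply_self_apply hrank v i
    rw [← b.repr.inner_map_map v (B v), PiLp.inner_apply]
    have h2 : ∀ i : Fin 2, (inner ℂ (b.repr v i) (b.repr (B v) i) : ℂ)
        = ((μ i * ‖c i‖ ^ 2 : ℝ) : ℂ) := by
      intro i
      rw [RCLike.inner_apply, hre2 i]
      exact (mul_comm _ _).trans (hterm i)
    rw [Finset.sum_congr rfl fun i _ => h2 i]
    push_cast
    ring
  have hinner2 : (inner ℂ v (B v) : ℂ) = ((‖T v‖ ^ 2 : ℝ) : ℂ) := by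
    rw [hBdef, ContinuousLinearMap.mul_apply, ContinuousLinearMap.star_eq_adjoint,
      ContinuousLinearMap.adjoint_inner_right, inner_self_eq_norm_sq_to_K]
    norm_cast
  have hR2 : R ^ 2 = ∑ i, μ i * ‖c i‖ ^ 2 := by
    have h1 := hinner2.symm.trans hinner
    rw [hRv] at h1
    exact_mod_cast h1
  -- sums over the two indices
  have huniv : (Finset.univ : Finset (Fin 2)) = {j, k} :=
    (Finset.eq_univ_of_card _ (by rw [Finset.card_pair hjk, Fintype.card_fin])).symm
  have hsum_jk : ∀ f : Fin 2 → ℝ, ∑ i, f i = f j + f k := by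
    intro f
    rw [huniv, Finset.sum_pair hjk]
  set t : ℝ := ‖c j‖ with htdef
  have ht0 : 0 ≤ t := norm_nonneg _
  have hck : ‖c k‖ ^ 2 = 1 - t ^ 2 := by
    have := hsum1
    rw [hsum_jk (fun i => ‖c i‖ ^ 2)] at this
    linarith
  have ht1 : t ≤ 1 := by nlinarith [sq_nonneg (‖c k‖)]
  have hR2' : R ^ 2 = (‖T‖ ^ 2)⁻¹ * t ^ 2 + ‖T‖ ^ 2 * (1 - t ^ 2) := by
    rw [hR2, hsum_jk (fun i => μ i * ‖c i‖ ^ 2), hμj, hμk, hck]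
  -- the angle θ
  have habs : ‖inner (𝕜 := ℂ) v (b j)‖ = t := by
    have h1 : (inner (𝕜 := ℂ) (b j) v : ℂ) = c j := (b.repr_apply_apply v j).symm
    rw [← inner_conj_symm v (b j), h1, Complex.norm_conj]
  have hθval : θ = Real.arccos t := by
    rw [hθ v hvV (b j) hsj hv1 hbj1, habs]
  -- ratio computation
  have hMgt : 1 < ‖T‖ ^ 2 := by nlinarith
  have hinvlt : (‖T‖ ^ 2)⁻¹ < 1 := by
    rw [inv_lt_one_iff₀]
    right; exact hMgt
  have hratio : (R ^ 2 - (‖T‖ ^ 2)⁻¹) / (‖T‖ ^ 2 - (‖T‖ ^ 2)⁻¹) = 1 - t ^ 2 := by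
    have hd : (0:ℝ) < ‖T‖ ^ 2 - (‖T‖ ^ 2)⁻¹ := by nlinarith
    rw [hR2', div_eq_iff (ne_of_gt hd)]
    ring
  rw [hM, hratio, ← Real.sin_arccos, ← hθval]
  have hθ0 : 0 ≤ θ := hθval ▸ Real.arccos_nonneg t
  have hθpi : θ ≤ Real.pi / 2 := hθval ▸ Real.arccos_le_pi_div_two.mpr ht0
  constructor
  · exact Real.sin_le hθ0
  · have h1 := Real.mul_le_sin hθ0 hθpi
    have hπ : (0:ℝ) < Real.pi := Real.pi_pos
    have h2 := mul_le_mul_of_nonneg_left h1 (by positivity : (0:ℝ) ≤ Real.pi / 2)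
    have h3 : Real.pi / 2 * (2 / Real.pi * θ) = θ := by field_simp
    linarith

end
end

section
/- Let A ∈ GL(2,ℂ) with |det A| = 1 and ‖A‖ > 1, and let S(A), U(A) be the eigenspaces of A*A corresponding to eigenvalues ‖A‖⁻² and ‖A‖² respectively. Then A·S(A) = U(A⁻¹) and A·U(A) = S(A⁻¹). -/
open Matrix

noncomputable section

/-- The most-expanded line of `A`: eigenspace of `A*A` for eigenvalue `‖A‖²`. -/
noncomputable def Uline (A : Matrix (Fin 2) (Fin 2) ℂ) : Submodule ℂ E2 :=
  Module.End.eigenspace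
    ((Matrix.toEuclideanCLM (𝕜 := ℂ) (n := Fin 2) (Aᴴ * A)).toLinearMap)
    (((opNorm A) ^ 2 : ℝ) : ℂ)

/-! ### Auxiliary lemmas -/

open scoped Matrix.Norms.L2Operator

section Aux

lemma aux_clm_apply (M : Matrix (Fin 2) (Fin 2) ℂ) (x : EuclideanSpace ℂ (Fin 2)) :
    toEuclideanCLM (𝕜 := ℂ) M x
      = (WithLp.equiv 2 (Fin 2 → ℂ)).symm (M *ᵥ (WithLp.equiv 2 (Fin 2 → ℂ) x)) := by
  rfl

lemma aux_mulVec_map_star (M : Matrix (Fin 2) (Fin 2) ℂ) (v : Fin 2 → ℂ) :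
    (M.map star) *ᵥ v = star (M *ᵥ star v) := by
  funext i
  simp [Matrix.mulVec, dotProduct, star_sum, Matrix.map_apply]
  fin_cases i <;> simp

lemma aux_norm_symm_star (v : Fin 2 → ℂ) :
    ‖(WithLp.equiv 2 (Fin 2 → ℂ)).symm (star v)‖ = ‖(WithLp.equiv 2 (Fin 2 → ℂ)).symm v‖ := by
  simp only [EuclideanSpace.norm_eq]
  congr 1
  exact Finset.sum_congr rfl fun i _ => by simp

lemma aux_norm_map_star_le (M : Matrix (Fin 2) (Fin 2) ℂ) : ‖M.map star‖ ≤ ‖M‖ := by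
  rw [Matrix.cstar_norm_def, Matrix.cstar_norm_def]
  apply ContinuousLinearMap.opNorm_le_bound _ (norm_nonneg _)
  intro x
  rw [aux_clm_apply, aux_mulVec_map_star, aux_norm_symm_star]
  have h2 : ‖x‖ = ‖(WithLp.equiv 2 (Fin 2 → ℂ)).symm (star (WithLp.equiv 2 (Fin 2 → ℂ) x))‖ := by
    rw [aux_norm_symm_star]; simp
  rw [h2]
  calc ‖(WithLp.equiv 2 (Fin 2 → ℂ)).symm (M *ᵥ star (WithLp.equiv 2 (Fin 2 → ℂ) x))‖
      = ‖toEuclideanCLM (𝕜 := ℂ) M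
          ((WithLp.equiv 2 (Fin 2 → ℂ)).symm (star (WithLp.equiv 2 (Fin 2 → ℂ) x)))‖ := by
        rw [aux_clm_apply]; simp
    _ ≤ _ := (toEuclideanCLM (𝕜 := ℂ) M).le_opNorm _

lemma aux_norm_map_star (M : Matrix (Fin 2) (Fin 2) ℂ) : ‖M.map star‖ = ‖M‖ := by
  refine le_antisymm (aux_norm_map_star_le M) ?_
  have h : (M.map star).map star = M := by ext i j; simp [Matrix.map_apply]
  have h2 := aux_norm_map_star_le (M.map star)
  rwa [h] at h2

lemma aux_norm_transpose (M : Matrix (Fin 2) (Fin 2) ℂ) : ‖Mᵀ‖ = ‖M‖ := by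
  have h : Mᵀ = Mᴴ.map star := by ext i j; simp [Matrix.conjTranspose_apply, Matrix.map_apply]
  rw [h, aux_norm_map_star, Matrix.l2_opNorm_conjTranspose]

lemma aux_norm_J_le : ‖(!![0,1;-1,0] : Matrix (Fin 2) (Fin 2) ℂ)‖ ≤ 1 := by
  rw [Matrix.cstar_norm_def]
  apply ContinuousLinearMap.opNorm_le_bound _ zero_le_one
  intro x
  rw [aux_clm_apply, one_mul]
  apply le_of_eq
  have h : ‖x‖ = ‖(WithLp.equiv 2 (Fin 2 → ℂ)).symm (WithLp.equiv 2 (Fin 2 → ℂ) x)‖ := by simp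
  rw [h]
  simp only [EuclideanSpace.norm_eq]
  congr 1
  simp [Matrix.mulVec, dotProduct, Fin.sum_univ_two, add_comm]

lemma aux_norm_J'_le : ‖(!![0,-1;1,0] : Matrix (Fin 2) (Fin 2) ℂ)‖ ≤ 1 := by
  have h : (!![0,-1;1,0] : Matrix (Fin 2) (Fin 2) ℂ) = (!![0,1;-1,0])ᵀ := by
    ext i j; fin_cases i <;> fin_cases j <;> simp
  rw [h, aux_norm_transpose]; exact aux_norm_J_le

lemma aux_adj_eq (A : Matrix (Fin 2) (Fin 2) ℂ) :
    A.adjugate = !![0,1;-1,0] * Aᵀ * !![(0:ℂ),-1;1,0] := by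
  ext i j
  fin_cases i <;> fin_cases j <;>
    simp [Matrix.adjugate_fin_two, Matrix.mul_apply, Matrix.vecMul, dotProduct,
      Fin.sum_univ_two]

lemma aux_norm_inv_le (A : Matrix (Fin 2) (Fin 2) ℂ) (hdet : ‖A.det‖ = 1) :
    ‖A⁻¹‖ ≤ ‖A‖ := by
  have hd : IsUnit A.det := isUnit_iff_ne_zero.2 (by
    intro h; rw [h] at hdet; simp at hdet)
  rw [Matrix.inv_def, Ring.inverse_eq_inv']
  rw [norm_smul]
  have h1 : ‖(A.det)⁻¹‖ = 1 := by
    rw [norm_inv, hdet, inv_one]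
  rw [h1, one_mul, aux_adj_eq]
  calc ‖!![0,1;-1,0] * Aᵀ * !![(0:ℂ),-1;1,0]‖
      ≤ ‖!![(0:ℂ),1;-1,0] * Aᵀ‖ * ‖!![(0:ℂ),-1;1,0]‖ := Matrix.l2_opNorm_mul _ _
    _ ≤ (‖!![(0:ℂ),1;-1,0]‖ * ‖Aᵀ‖) * ‖!![(0:ℂ),-1;1,0]‖ :=
        mul_le_mul_of_nonneg_right (Matrix.l2_opNorm_mul _ _) (norm_nonneg _)
    _ ≤ (1 * ‖A‖) * 1 :=
        mul_le_mul (mul_le_mul aux_norm_J_le (le_of_eq (aux_norm_transpose A)) (norm_nonneg _)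
          zero_le_one) aux_norm_J'_le (norm_nonneg _) (by positivity)
    _ = ‖A‖ := by ring

lemma aux_abs_det_inv (A : Matrix (Fin 2) (Fin 2) ℂ) (hdet : ‖A.det‖ = 1) :
    ‖(A⁻¹).det‖ = 1 := by
  have hd : IsUnit A.det := isUnit_iff_ne_zero.2 (by intro h; rw [h] at hdet; simp at hdet)
  rw [Matrix.det_nonsing_inv, Ring.inverse_eq_inv', norm_inv, hdet, inv_one]

lemma aux_norm_inv_eq (A : Matrix (Fin 2) (Fin 2) ℂ) (hdet : ‖A.det‖ = 1) :
    ‖A⁻¹‖ = ‖A‖ := by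
  have hd : IsUnit A.det := isUnit_iff_ne_zero.2 (by intro h; rw [h] at hdet; simp at hdet)
  refine le_antisymm (aux_norm_inv_le A hdet) ?_
  have h := aux_norm_inv_le A⁻¹ (aux_abs_det_inv A hdet)
  rwa [Matrix.nonsing_inv_nonsing_inv A hd] at h

lemma aux_eig_map_le (A : Matrix (Fin 2) (Fin 2) ℂ) (hd : IsUnit A.det) (μ : ℂ) (hμ : μ ≠ 0) :
    Submodule.map (Matrix.toEuclideanCLM (𝕜 := ℂ) (n := Fin 2) A).toLinearMap
      (Module.End.eigenspace
        ((Matrix.toEuclideanCLM (𝕜 := ℂ) (n := Fin 2) (Aᴴ * A)).toLinearMap) μ)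
    ≤ Module.End.eigenspace
        ((Matrix.toEuclideanCLM (𝕜 := ℂ) (n := Fin 2) ((A⁻¹)ᴴ * A⁻¹)).toLinearMap) μ⁻¹ := by
  rintro _ ⟨x, hx, rfl⟩
  rw [SetLike.mem_coe, Module.End.mem_eigenspace_iff] at hx
  rw [Module.End.mem_eigenspace_iff]
  simp only [ContinuousLinearMap.coe_coe] at hx ⊢
  have hdH : IsUnit Aᴴ.det := by
    rw [Matrix.det_conjTranspose]; exact hd.star
  have hx' : toEuclideanCLM (𝕜 := ℂ) Aᴴ (toEuclideanCLM (𝕜 := ℂ) A x) = μ • x := by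
    rw [← ContinuousLinearMap.mul_apply, ← _root_.map_mul]; exact hx
  have e2 : toEuclideanCLM (𝕜 := ℂ) ((Aᴴ)⁻¹)
      (toEuclideanCLM (𝕜 := ℂ) Aᴴ (toEuclideanCLM (𝕜 := ℂ) A x))
      = toEuclideanCLM (𝕜 := ℂ) A x := by
    rw [← ContinuousLinearMap.mul_apply, ← _root_.map_mul, Matrix.nonsing_inv_mul _ hdH, _root_.map_one,
      ContinuousLinearMap.one_apply]
  have e3 : toEuclideanCLM (𝕜 := ℂ) ((Aᴴ)⁻¹) x
      = μ⁻¹ • toEuclideanCLM (𝕜 := ℂ) A x := by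
    rw [hx', _root_.map_smul] at e2
    rw [eq_comm, ← e2, smul_smul, inv_mul_cancel₀ hμ, one_smul]
  have key : (A⁻¹)ᴴ * A⁻¹ * A = (Aᴴ)⁻¹ := by
    rw [mul_assoc, Matrix.nonsing_inv_mul A hd, mul_one, Matrix.conjTranspose_nonsing_inv]
  calc toEuclideanCLM (𝕜 := ℂ) ((A⁻¹)ᴴ * A⁻¹) (toEuclideanCLM (𝕜 := ℂ) A x)
      = toEuclideanCLM (𝕜 := ℂ) ((A⁻¹)ᴴ * A⁻¹ * A) x := by
        rw [_root_.map_mul ((toEuclideanCLM (𝕜 := ℂ) (n := Fin 2))) ((A⁻¹)ᴴ * A⁻¹) A,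
          ContinuousLinearMap.mul_apply]
    _ = μ⁻¹ • toEuclideanCLM (𝕜 := ℂ) A x := by rw [key]; exact e3

lemma aux_eig_map_eq (A : Matrix (Fin 2) (Fin 2) ℂ) (hd : IsUnit A.det) (μ : ℂ) (hμ : μ ≠ 0) :
    Submodule.map (Matrix.toEuclideanCLM (𝕜 := ℂ) (n := Fin 2) A).toLinearMap
      (Module.End.eigenspace
        ((Matrix.toEuclideanCLM (𝕜 := ℂ) (n := Fin 2) (Aᴴ * A)).toLinearMap) μ)
    = Module.End.eigenspace
        ((Matrix.toEuclideanCLM (𝕜 := ℂ) (n := Fin 2) ((A⁻¹)ᴴ * A⁻¹)).toLinearMap) μ⁻¹ := by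
  refine le_antisymm (aux_eig_map_le A hd μ hμ) ?_
  have hd' : IsUnit (A⁻¹).det := by
    rw [Matrix.det_nonsing_inv, Ring.inverse_eq_inv']
    exact hd.inv
  have h2 := aux_eig_map_le A⁻¹ hd' μ⁻¹ (inv_ne_zero hμ)
  rw [Matrix.nonsing_inv_nonsing_inv A hd, inv_inv] at h2
  have h3 := Submodule.map_mono
    (f := (Matrix.toEuclideanCLM (𝕜 := ℂ) (n := Fin 2) A).toLinearMap) h2
  rwa [← Submodule.map_comp, show
      ((Matrix.toEuclideanCLM (𝕜 := ℂ) (n := Fin 2) A).toLinearMap).comp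
        (Matrix.toEuclideanCLM (𝕜 := ℂ) (n := Fin 2) A⁻¹).toLinearMap = LinearMap.id from ?_,
    Submodule.map_id] at h3
  ext x
  simp only [LinearMap.coe_comp, Function.comp_apply, ContinuousLinearMap.coe_coe,
    LinearMap.id_coe, id_eq]
  rw [← ContinuousLinearMap.mul_apply, ← _root_.map_mul, Matrix.mul_nonsing_inv A hd, _root_.map_one,
    ContinuousLinearMap.one_apply]

end Aux

/-- `A·S(A) = U(A⁻¹)` and `A·U(A) = S(A⁻¹)`. -/
theorem image_of_singular_lines (A : Matrix (Fin 2) (Fin 2) ℂ)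
    (hdet : ‖A.det‖ = 1) (hnorm : 1 < opNorm A) :
    Submodule.map (Matrix.toEuclideanCLM (𝕜 := ℂ) (n := Fin 2) A).toLinearMap (Sline A)
        = Uline A⁻¹ ∧
    Submodule.map (Matrix.toEuclideanCLM (𝕜 := ℂ) (n := Fin 2) A).toLinearMap (Uline A)
        = Sline A⁻¹ := by
  have hd : IsUnit A.det := isUnit_iff_ne_zero.2 (by intro h; rw [h] at hdet; simp at hdet)
  have hop : opNorm A⁻¹ = opNorm A := aux_norm_inv_eq A hdet
  have hpos : (0 : ℝ) < opNorm A := lt_trans one_pos hnorm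
  have hsq : ((opNorm A) ^ 2 : ℝ) ≠ 0 := by positivity
  constructor
  · rw [Sline, aux_eig_map_eq A hd _ (by
      simpa using Complex.ofReal_ne_zero.2 (inv_ne_zero hsq))]
    rw [Uline, hop]
    congr 1
    rw [← Complex.ofReal_inv, inv_inv]
  · rw [Uline, aux_eig_map_eq A hd _ (by simpa using Complex.ofReal_ne_zero.2 hsq)]
    rw [Sline, hop]
    congr 1
    rw [← Complex.ofReal_inv]

end
end

section
/- Let ℰ be an extended CMV matrix on ℓ²(ℤ) with Verblunsky coefficients α_n ∈ 𝔻. If z ∈ ∂𝔻 is a generalized eigenvalue of ℰ (i.e., there is a nonzero polynomially bounded sequence φ with ℰφ = zφ), then z belongs to the spectrum of ℰ. -/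
open scoped ENNReal


noncomputable section

/-- `ρ_k = (1 − |α_k|²)^{1/2}`, as a complex number. -/
noncomputable def rhoC (α : ℤ → ℂ) (k : ℤ) : ℂ :=
  ((Real.sqrt (1 - ‖α k‖ ^ 2) : ℝ) : ℂ)

/-- The `(m,n)` entry of the extended CMV matrix with Verblunsky
coefficients `α`. -/
noncomputable def cmvEntry (α : ℤ → ℂ) (m n : ℤ) : ℂ :=
  if m % 2 = 0 then
    if n = m - 1 then (starRingEnd ℂ) (α m) * rhoC α (m - 1)
    else if n = m then -((starRingEnd ℂ) (α m)) * α (m - 1)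
    else if n = m + 1 then rhoC α m * (starRingEnd ℂ) (α (m + 1))
    else if n = m + 2 then rhoC α m * rhoC α (m + 1)
    else 0
  else
    if n = m - 2 then rhoC α (m - 1) * rhoC α (m - 2)
    else if n = m - 1 then -(rhoC α (m - 1)) * α (m - 2)
    else if n = m then -(α (m - 1)) * (starRingEnd ℂ) (α m)
    else if n = m + 1 then -(α (m - 1)) * rhoC α m
    else 0

/-- The formal (pointwise) action of the extended CMV matrix on a
complex sequence; each row has at most five nonzero entries, located
in columns `m-2, …, m+2`. -/
noncomputable def cmvApply (α : ℤ → ℂ) (φ : ℤ → ℂ) (m : ℤ) : ℂ :=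
  ∑ j ∈ Finset.Icc (m - 2) (m + 2), cmvEntry α m j * φ j

/-- `φ : ℤ → ℂ` is polynomially bounded: `|φ_n| ≤ R (1+|n|)^S`. -/
def PolyBounded (φ : ℤ → ℂ) : Prop :=
  ∃ R S : ℝ, 0 < R ∧ 0 < S ∧
    ∀ n : ℤ, ‖φ n‖ ≤ R * Real.rpow (1 + (n.natAbs : ℝ)) S

namespace CMVAux

lemma abs_rhoC_le_one (α : ℤ → ℂ) (k : ℤ) : ‖rhoC α k‖ ≤ 1 := by
  rw [rhoC, Complex.norm_real, Real.norm_of_nonneg (Real.sqrt_nonneg _)]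
  exact Real.sqrt_le_one.2 (by nlinarith [sq_nonneg (‖α k‖)])

lemma abs_cmvEntry_le_one (α : ℤ → ℂ) (hα : ∀ k, ‖α k‖ < 1) (m j : ℤ) :
    ‖cmvEntry α m j‖ ≤ 1 := by
  have hρ := abs_rhoC_le_one α
  have hαle : ∀ k, ‖α k‖ ≤ 1 := fun k => (hα k).le
  have hc : ∀ k, ‖(starRingEnd ℂ) (α k)‖ ≤ 1 := by
    intro k; rw [Complex.norm_conj]; exact hαle k
  have hmul : ∀ x y : ℂ, ‖x‖ ≤ 1 → ‖y‖ ≤ 1 →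
      ‖x * y‖ ≤ 1 := by
    intro x y hx hy
    rw [norm_mul]
    exact mul_le_one₀ hx (norm_nonneg _) hy
  have hnegmul : ∀ x y : ℂ, ‖x‖ ≤ 1 → ‖y‖ ≤ 1 →
      ‖-x * y‖ ≤ 1 := by
    intro x y hx hy
    rw [neg_mul, norm_neg]
    exact hmul x y hx hy
  rw [cmvEntry]
  split_ifs
  · exact hmul _ _ (hc _) (hρ _)
  · exact hnegmul _ _ (hc _) (hαle _)
  · exact hmul _ _ (hρ _) (hc _)
  · exact hmul _ _ (hρ _) (hρ _)
  · simp
  · exact hmul _ _ (hρ _) (hρ _)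
  · exact hnegmul _ _ (hρ _) (hαle _)
  · exact hnegmul _ _ (hαle _) (hc _)
  · exact hnegmul _ _ (hαle _) (hρ _)
  · simp

lemma abs_cmvApply_le (α : ℤ → ℂ) (hα : ∀ k, ‖α k‖ < 1) (ψ : ℤ → ℂ) (m : ℤ) :
    ‖cmvApply α ψ m‖ ≤ ∑ j ∈ Finset.Icc (m - 2) (m + 2), ‖ψ j‖ := by
  refine (norm_sum_le _ _).trans (Finset.sum_le_sum fun j _ => ?_)
  rw [norm_mul]
  calc ‖cmvEntry α m j‖ * ‖ψ j‖
      ≤ 1 * ‖ψ j‖ :=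
        mul_le_mul_of_nonneg_right (abs_cmvEntry_le_one α hα m j) (norm_nonneg _)
    _ = ‖ψ j‖ := one_mul _



/-- Coercion of a finite sum of `lp.single`s. -/
lemma sum_single_apply (s : Finset ℤ) (w : ℤ → ℂ) (j : ℤ) :
    ((∑ k ∈ s, lp.single 2 k (w k) : lp (fun _ : ℤ => ℂ) 2) : ∀ _ : ℤ, ℂ) j
      = if j ∈ s then w j else 0 := by
  classical
  rw [lp.coeFn_sum]
  simp only [Finset.sum_apply, lp.single_apply, Pi.single_apply, Finset.sum_ite_eq]

/-- Norm squared of a finite sum of `lp.single`s. -/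
lemma norm_sum_single_sq (s : Finset ℤ) (w : ℤ → ℂ) :
    ‖(∑ k ∈ s, lp.single 2 k (w k) : lp (fun _ : ℤ => ℂ) 2)‖ ^ 2
      = ∑ k ∈ s, ‖w k‖ ^ 2 := by
  classical
  have h2 : (0:ℝ) < (2 : ℝ≥0∞).toReal := by norm_num
  have h := lp.norm_sum_single h2 w s
  have ht : (2 : ℝ≥0∞).toReal = (2 : ℝ) := by norm_num
  rw [ht] at h
  have hl : ‖(∑ k ∈ s, lp.single 2 k (w k) : lp (fun _ : ℤ => ℂ) 2)‖ ^ (2:ℝ)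
      = ‖(∑ k ∈ s, lp.single 2 k (w k) : lp (fun _ : ℤ => ℂ) 2)‖ ^ (2:ℕ) := by
    rw [Real.rpow_two]
  rw [hl] at h
  rw [h]
  refine Finset.sum_congr rfl fun k _ => ?_
  rw [Real.rpow_two]


/-- truncation of `φ` to `[-n, n]`. -/
noncomputable def trunc (φ : ℤ → ℂ) (n : ℤ) : ℤ → ℂ :=
  fun k => if k ∈ Finset.Icc (-n) n then φ k else 0

noncomputable def aSum (φ : ℤ → ℂ) (n : ℤ) : ℝ :=
  ∑ k ∈ Finset.Icc (-n) n, ‖φ k‖ ^ 2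

lemma aSum_mono (φ : ℤ → ℂ) {m n : ℤ} (h : m ≤ n) : aSum φ m ≤ aSum φ n :=
  Finset.sum_le_sum_of_subset_of_nonneg
    (Finset.Icc_subset_Icc (by omega) h) (fun k _ _ => sq_nonneg _)

lemma key (α φ : ℤ → ℂ) (z : ℂ) (hα : ∀ k, ‖α k‖ < 1)
    (hz : ‖z‖ = 1)
    (heig : ∀ m : ℤ, cmvApply α φ m = z * φ m)
    (𝓔 : lp (fun _ : ℤ => ℂ) 2 →L[ℂ] lp (fun _ : ℤ => ℂ) 2)
    (h𝓔 : ∀ (ψ : lp (fun _ : ℤ => ℂ) 2) (m : ℤ), (𝓔 ψ) m = cmvApply α (⇑ψ) m)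
    (Cv : ℝ) (hCv : 0 ≤ Cv)
    (hbound : ∀ x : lp (fun _ : ℤ => ℂ) 2, ‖x‖ ≤ Cv * ‖z • x - 𝓔 x‖)
    (n : ℤ) (hn : 4 ≤ n) :
    aSum φ n ≤ 288 * Cv ^ 2 * (aSum φ n - aSum φ (n - 4)) := by
  classical
  set f : ℤ → ℂ := trunc φ n with hf
  set ψ : lp (fun _ : ℤ => ℂ) 2 := ∑ k ∈ Finset.Icc (-n) n, lp.single 2 k (f k) with hψdef
  have hψ : ∀ j, (ψ : ∀ _ : ℤ, ℂ) j = f j := by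
    intro j
    rw [hψdef, sum_single_apply]
    by_cases hj : j ∈ Finset.Icc (-n) n
    · rw [if_pos hj]
    · rw [if_neg hj, hf]; simp [trunc, hj]
  have hψfun : (ψ : ∀ _ : ℤ, ℂ) = f := funext hψ
  set D : ℝ := Real.sqrt (aSum φ n - aSum φ (n - 4)) with hDdef
  have hD0 : 0 ≤ D := Real.sqrt_nonneg _
  have hDsub : 0 ≤ aSum φ n - aSum φ (n - 4) := by
    have := aSum_mono φ (show n - 4 ≤ n by omega)
    linarith
  have hD2 : D ^ 2 = aSum φ n - aSum φ (n - 4) := Real.sq_sqrt hDsub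
  -- the edge bound
  have hedge : ∀ j : ℤ, (j < -(n - 4) ∨ n - 4 < j) → ‖f j‖ ≤ D := by
    intro j hj
    by_cases hjs : j ∈ Finset.Icc (-n) n
    · have hfj : f j = φ j := by rw [hf]; simp [trunc, hjs]
      have hsub : Finset.Icc (-(n - 4)) (n - 4) ⊆ Finset.Icc (-n) n :=
        Finset.Icc_subset_Icc (by omega) (by omega)
      have hdiff : aSum φ n - aSum φ (n - 4)
          = ∑ k ∈ Finset.Icc (-n) n \ Finset.Icc (-(n - 4)) (n - 4),
              ‖φ k‖ ^ 2 := by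
        have h := Finset.sum_sdiff_eq_sub (f := fun k => ‖φ k‖ ^ 2) hsub
        rw [aSum, aSum]
        linarith [h]
      have hjd : j ∈ Finset.Icc (-n) n \ Finset.Icc (-(n - 4)) (n - 4) := by
        simp only [Finset.mem_sdiff, Finset.mem_Icc] at *
        omega
      have h1 : ‖φ j‖ ^ 2 ≤ aSum φ n - aSum φ (n - 4) := by
        rw [hdiff]
        exact Finset.single_le_sum (f := fun k => ‖φ k‖ ^ 2) (fun k _ => sq_nonneg _) hjd
      rw [hfj]
      have h2 := Real.sqrt_le_sqrt h1
      rwa [Real.sqrt_sq (norm_nonneg _)] at h2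
    · have : f j = 0 := by rw [hf]; simp [trunc, hjs]
      rw [this]; simpa using hD0
  -- the defect
  set v : ℤ → ℂ := fun m => z * f m - cmvApply α f m with hv
  set bad : Finset ℤ := Finset.Icc (-(n + 2)) (n + 2) \ Finset.Icc (-(n - 2)) (n - 2)
    with hbaddef
  have hmembad : ∀ m : ℤ, m ∈ bad ↔
      ((-(n+2) ≤ m ∧ m ≤ n + 2) ∧ ¬(-(n-2) ≤ m ∧ m ≤ n - 2)) := by
    intro m; rw [hbaddef]; simp [Finset.mem_sdiff, Finset.mem_Icc]
  -- v vanishes off bad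
  have hv0 : ∀ m : ℤ, m ∉ bad → v m = 0 := by
    intro m hm
    rw [hmembad] at hm
    push_neg at hm
    by_cases h1 : -(n+2) ≤ m ∧ m ≤ n + 2
    · obtain ⟨h2, h3⟩ := hm h1
      have hA : cmvApply α f m = cmvApply α φ m := by
        rw [cmvApply, cmvApply]
        refine Finset.sum_congr rfl fun j hj => ?_
        rw [Finset.mem_Icc] at hj
        have : f j = φ j := by
          rw [hf]; simp only [trunc, Finset.mem_Icc]
          rw [if_pos (by omega)]
        rw [this]
      have hfm : f m = φ m := by
        rw [hf]; simp only [trunc, Finset.mem_Icc]; rw [if_pos (by omega)]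
      rw [hv]
      simp only [hA, hfm, heig m, sub_self]
    · push_neg at h1
      have hB : ∀ j ∈ Finset.Icc (m - 2) (m + 2), f j = 0 := by
        intro j hj
        rw [Finset.mem_Icc] at hj
        rw [hf]; simp only [trunc, Finset.mem_Icc]
        rw [if_neg (by omega)]
      have hfm : f m = 0 := by
        rw [hf]; simp only [trunc, Finset.mem_Icc]
        rw [if_neg (by omega)]
      rw [hv]
      simp only [hfm, mul_zero, cmvApply, zero_sub, neg_eq_zero]
      refine Finset.sum_eq_zero fun j hj => ?_
      rw [hB j hj, mul_zero]
  -- the bound on v on bad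
  have hvD : ∀ m ∈ bad, ‖v m‖ ≤ 6 * D := by
    intro m hm
    rw [hmembad] at hm
    have hcm : ‖cmvApply α f m‖ ≤ 5 * D := by
      refine (abs_cmvApply_le α hα f m).trans ?_
      have hle : ∀ j ∈ Finset.Icc (m - 2) (m + 2), ‖f j‖ ≤ D := by
        intro j hj
        rw [Finset.mem_Icc] at hj
        exact hedge j (by omega)
      refine (Finset.sum_le_sum hle).trans ?_
      rw [Finset.sum_const, Int.card_Icc]
      have h5 : (m + 2 + 1 - (m - 2)).toNat = 5 := by omega
      rw [h5]
      simp [nsmul_eq_mul]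
    have hfm : ‖z * f m‖ ≤ D := by
      rw [norm_mul, hz, one_mul]
      exact hedge m (by omega)
    calc ‖v m‖ = ‖z * f m - cmvApply α f m‖ := by rw [hv]
      _ ≤ ‖z * f m‖ + ‖cmvApply α f m‖ := by
          exact norm_sub_le _ _
      _ ≤ D + 5 * D := add_le_add hfm hcm
      _ = 6 * D := by ring
  -- g is the defect vector
  set g : lp (fun _ : ℤ => ℂ) 2 := ∑ m ∈ bad, lp.single 2 m (v m) with hgdef
  have heqg : z • ψ - 𝓔 ψ = g := by
    apply lp.ext
    funext m
    have hL : ((z • ψ - 𝓔 ψ : lp (fun _ : ℤ => ℂ) 2) : ∀ _ : ℤ, ℂ) m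
        = z * f m - cmvApply α f m := by
      rw [lp.coeFn_sub, lp.coeFn_smul]
      simp only [Pi.sub_apply, Pi.smul_apply, smul_eq_mul]
      rw [hψ m, h𝓔 ψ m, hψfun]
    have hR : ((g : lp (fun _ : ℤ => ℂ) 2) : ∀ _ : ℤ, ℂ) m = v m := by
      rw [hgdef, sum_single_apply]
      by_cases hm : m ∈ bad
      · rw [if_pos hm]
      · rw [if_neg hm, hv0 m hm]
    rw [hL, hR, hv]
  -- card of bad
  have hcard : bad.card = 8 := by
    rw [hbaddef, Finset.card_sdiff_of_subset (Finset.Icc_subset_Icc (by omega) (by omega)),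
      Int.card_Icc, Int.card_Icc]
    omega
  -- norm bound on g
  have hgsq : ‖g‖ ^ 2 ≤ 288 * D ^ 2 := by
    rw [hgdef, norm_sum_single_sq]
    have : ∑ m ∈ bad, ‖v m‖ ^ 2 ≤ ∑ m ∈ bad, (6 * D) ^ 2 :=
      Finset.sum_le_sum fun m hm =>
        pow_le_pow_left₀ (norm_nonneg _) (hvD m hm) 2
    refine this.trans ?_
    rw [Finset.sum_const, hcard]
    simp [nsmul_eq_mul]
    nlinarith [hD0]
  -- norm of ψ
  have hψsq : ‖ψ‖ ^ 2 = aSum φ n := by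
    rw [hψdef, norm_sum_single_sq, aSum]
    refine Finset.sum_congr rfl fun k hk => ?_
    rw [hf]; simp [trunc, hk]
  -- conclude
  have hb := hbound ψ
  rw [heqg] at hb
  have hsq : ‖ψ‖ ^ 2 ≤ Cv ^ 2 * ‖g‖ ^ 2 := by
    have := pow_le_pow_left₀ (norm_nonneg ψ) hb 2
    rw [mul_pow] at this
    exact this
  rw [hψsq] at hsq
  calc aSum φ n ≤ Cv ^ 2 * ‖g‖ ^ 2 := hsq
    _ ≤ Cv ^ 2 * (288 * D ^ 2) := by
        exact mul_le_mul_of_nonneg_left hgsq (sq_nonneg Cv)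
    _ = 288 * Cv ^ 2 * (aSum φ n - aSum φ (n - 4)) := by rw [hD2]; ring


/-- polynomial upper bound on `aSum`. -/
lemma aSum_upper (φ : ℤ → ℂ) (R S : ℝ) (hR : 0 < R)
    (hb : ∀ k : ℤ, ‖φ k‖ ≤ R * Real.rpow (1 + (k.natAbs : ℝ)) S)
    (n : ℤ) (hn : 0 ≤ n) :
    aSum φ n ≤ 2 * R ^ 2 * (1 + (n : ℝ)) ^ (2 * ⌈S⌉₊ + 1) := by
  set S' : ℕ := ⌈S⌉₊ with hS'
  have hn' : (0:ℝ) ≤ (n:ℝ) := by exact_mod_cast hn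
  have hterm : ∀ k ∈ Finset.Icc (-n) n,
      ‖φ k‖ ^ 2 ≤ R ^ 2 * (1 + (n : ℝ)) ^ (2 * S') := by
    intro k hk
    have hbase1 : (1:ℝ) ≤ 1 + (k.natAbs : ℝ) := by
      have : (0:ℝ) ≤ (k.natAbs : ℝ) := Nat.cast_nonneg _
      linarith
    have h1 : ‖φ k‖ ≤ R * (1 + (k.natAbs : ℝ)) ^ (S' : ℝ) := by
      refine (hb k).trans ?_
      have := Real.rpow_le_rpow_of_exponent_le hbase1 (Nat.le_ceil S)
      exact mul_le_mul_of_nonneg_left this hR.le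
    rw [Real.rpow_natCast] at h1
    have h3 : (1 + (k.natAbs : ℝ)) ≤ 1 + (n : ℝ) := by
      rw [Finset.mem_Icc] at hk
      have h4 : (k.natAbs : ℤ) ≤ n := by omega
      have h5 : ((k.natAbs : ℤ) : ℝ) ≤ ((n : ℤ) : ℝ) := by exact_mod_cast h4
      have : (k.natAbs : ℝ) ≤ (n : ℝ) := by
        push_cast at h5
        rw [Nat.cast_natAbs]
        push_cast
        exact h5
      linarith
    calc ‖φ k‖ ^ 2 ≤ (R * (1 + (k.natAbs : ℝ)) ^ S') ^ 2 :=
          pow_le_pow_left₀ (norm_nonneg _) h1 2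
      _ = R ^ 2 * (1 + (k.natAbs : ℝ)) ^ (2 * S') := by
          rw [mul_pow, ← pow_mul, Nat.mul_comm]
      _ ≤ R ^ 2 * (1 + (n : ℝ)) ^ (2 * S') := by
          refine mul_le_mul_of_nonneg_left ?_ (sq_nonneg R)
          exact pow_le_pow_left₀ (by linarith) h3 _
  have hcard : ((Finset.Icc (-n) n).card : ℝ) ≤ 2 * (1 + (n : ℝ)) := by
    rw [Int.card_Icc]
    have h1 : ((n + 1 - -n).toNat : ℤ) = 2 * n + 1 := by omega
    have h2 : (((n + 1 - -n).toNat : ℤ) : ℝ) = 2 * (n:ℝ) + 1 := by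
      rw [h1]; push_cast; ring
    rw [Int.cast_natCast] at h2
    rw [h2]; linarith
  calc aSum φ n ≤ ∑ _k ∈ Finset.Icc (-n) n, R ^ 2 * (1 + (n : ℝ)) ^ (2 * S') :=
        Finset.sum_le_sum hterm
    _ = ((Finset.Icc (-n) n).card : ℝ) * (R ^ 2 * (1 + (n : ℝ)) ^ (2 * S')) := by
        rw [Finset.sum_const, nsmul_eq_mul]
    _ ≤ 2 * (1 + (n : ℝ)) * (R ^ 2 * (1 + (n : ℝ)) ^ (2 * S')) := by
        refine mul_le_mul_of_nonneg_right hcard ?_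
        positivity
    _ = 2 * R ^ 2 * (1 + (n : ℝ)) ^ (2 * S' + 1) := by
        rw [pow_succ]; ring


lemma final_contradiction
    (φ : ℤ → ℂ) (hφ0 : φ ≠ 0) (R S : ℝ) (hR : 0 < R) (hS : 0 < S)
    (haup : ∀ n : ℤ, 0 ≤ n → aSum φ n ≤ 2 * R ^ 2 * (1 + (n : ℝ)) ^ (2 * ⌈S⌉₊ + 1))
    (Cv : ℝ) (hCv : 0 ≤ Cv)
    (hkey : ∀ n : ℤ, 4 ≤ n → aSum φ n ≤ 288 * Cv ^ 2 * (aSum φ n - aSum φ (n - 4))) :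
    False := by
  classical
  set K : ℕ := 2 * ⌈S⌉₊ + 1 with hK
  obtain ⟨k0, hk0⟩ : ∃ k, φ k ≠ 0 := by
    by_contra h
    push_neg at h
    exact hφ0 (funext h)
  set n0 : ℤ := max |k0| 4 with hn0def
  have hn04 : (4:ℤ) ≤ n0 := le_max_right _ _
  have hn0k : |k0| ≤ n0 := le_max_left _ _
  have hn0k : |k0| ≤ n0 := le_max_left _ _
  have ha0 : 0 < aSum φ n0 := by
    rw [aSum]
    refine Finset.sum_pos' (fun k _ => sq_nonneg _) ⟨k0, ?_, ?_⟩
    · rw [Finset.mem_Icc]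
      have := abs_le.mp hn0k
      omega
    · have := norm_pos_iff.mpr hk0
      positivity
  set Csq : ℝ := 288 * Cv ^ 2 + 2 with hCsqdef
  have hCsq2 : (2:ℝ) ≤ Csq := by nlinarith [sq_nonneg Cv]
  have hkey' : ∀ n : ℤ, 4 ≤ n → Csq * aSum φ (n - 4) ≤ (Csq - 1) * aSum φ n := by
    intro n hn
    have h1 := hkey n hn
    have h2 : aSum φ (n - 4) ≤ aSum φ n := aSum_mono φ (by omega)
    nlinarith [sq_nonneg Cv]
  set q : ℝ := Csq / (Csq - 1) with hqdef
  have h1q : 1 < q := by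
    rw [hqdef, one_lt_div (by linarith)]
    linarith
  have h0q : (0:ℝ) < q := by linarith
  have hgrow : ∀ t : ℕ, q ^ t * aSum φ n0 ≤ aSum φ (n0 + 4 * t) := by
    intro t
    induction t with
    | zero => simp
    | succ t ih =>
      have hn' : (4:ℤ) ≤ n0 + 4 * ((t:ℤ) + 1) := by omega
      have hk := hkey' (n0 + 4 * ((t:ℤ) + 1)) hn'
      have hidx : n0 + 4 * ((t:ℤ) + 1) - 4 = n0 + 4 * (t:ℤ) := by ring
      rw [hidx] at hk
      have step : q * aSum φ (n0 + 4 * (t:ℤ)) ≤ aSum φ (n0 + 4 * ((t:ℤ) + 1)) := by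
        rw [hqdef, div_mul_eq_mul_div, div_le_iff₀ (by linarith)]
        linarith
      have hgoal : q ^ (t + 1) * aSum φ n0 ≤ aSum φ (n0 + 4 * ((t:ℤ) + 1)) := by
        calc q ^ (t + 1) * aSum φ n0 = q * (q ^ t * aSum φ n0) := by ring
          _ ≤ q * aSum φ (n0 + 4 * (t:ℤ)) := mul_le_mul_of_nonneg_left ih h0q.le
          _ ≤ aSum φ (n0 + 4 * ((t:ℤ) + 1)) := step
      exact_mod_cast hgoal
  set C0 : ℝ := 2 * R ^ 2 * (5 + (n0:ℝ)) ^ K with hC0def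
  have hn0r : (4:ℝ) ≤ (n0:ℝ) := by exact_mod_cast hn04
  have h5pos : (0:ℝ) < 5 + (n0:ℝ) := by linarith
  have hC0 : 0 < C0 := by
    rw [hC0def]
    have := pow_pos h5pos K
    positivity
  have hlo := isLittleO_pow_const_const_pow_of_one_lt (R := ℝ) K h1q
  have heps : 0 < aSum φ n0 / (2 * C0) := by positivity
  obtain ⟨t, ht1, ht2⟩ := ((hlo.def heps).and (Filter.eventually_ge_atTop 1)).exists
  rw [Real.norm_eq_abs, Real.norm_eq_abs, abs_of_nonneg (by positivity),
    abs_of_nonneg (pow_nonneg h0q.le t)] at ht1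
  have htr : (1:ℝ) ≤ (t:ℝ) := by exact_mod_cast ht2
  have hup := haup (n0 + 4 * (t:ℤ)) (by omega)
  have hbase : 1 + ((n0 + 4 * (t:ℤ) : ℤ):ℝ) ≤ (5 + (n0:ℝ)) * (t:ℝ) := by
    push_cast
    nlinarith
  have h2 : aSum φ (n0 + 4 * (t:ℤ)) ≤ C0 * (t:ℝ) ^ K := by
    refine hup.trans ?_
    calc 2 * R ^ 2 * (1 + ((n0 + 4 * (t:ℤ) : ℤ):ℝ)) ^ K
        ≤ 2 * R ^ 2 * ((5 + (n0:ℝ)) * (t:ℝ)) ^ K := by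
          refine mul_le_mul_of_nonneg_left (pow_le_pow_left₀ ?_ hbase K) (by positivity)
          push_cast
          nlinarith
      _ = C0 * (t:ℝ) ^ K := by rw [hC0def, mul_pow]; ring
  have h3 := (hgrow t).trans (h2.trans (mul_le_mul_of_nonneg_left ht1 hC0.le))
  have hqt : (0:ℝ) < q ^ t := pow_pos h0q t
  have h4 : C0 * (aSum φ n0 / (2 * C0) * q ^ t) = aSum φ n0 / 2 * q ^ t := by
    field_simp
  rw [h4] at h3
  nlinarith


end CMVAux

/-- if `z ∈ ∂𝔻` is a generalized eigenvalue of an extended CMV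
matrix `ℰ` (there is a nonzero polynomially bounded `φ` with `ℰφ = zφ`), then
`z ∈ σ(ℰ)`. -/
theorem generalized_eigenvalue_mem_spectrum
    (α : ℤ → ℂ) (hα : ∀ n, ‖α n‖ < 1)
    (𝓔 : lp (fun _ : ℤ => ℂ) 2 →L[ℂ] lp (fun _ : ℤ => ℂ) 2)
    (h𝓔 : ∀ (ψ : lp (fun _ : ℤ => ℂ) 2) (m : ℤ), (𝓔 ψ) m = cmvApply α (⇑ψ) m)
    (z : ℂ) (hz : ‖z‖ = 1)
    (φ : ℤ → ℂ) (hφ0 : φ ≠ 0) (hpoly : PolyBounded φ)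
    (heig : ∀ m : ℤ, cmvApply α φ m = z * φ m) :
    z ∈ spectrum ℂ 𝓔 := by
  classical
  by_contra hspec
  rw [spectrum.mem_iff, not_not] at hspec
  obtain ⟨u, hu⟩ := hspec
  set V : lp (fun _ : ℤ => ℂ) 2 →L[ℂ] lp (fun _ : ℤ => ℂ) 2 := ↑u⁻¹ with hVdef
  have hbound : ∀ x : lp (fun _ : ℤ => ℂ) 2, ‖x‖ ≤ ‖V‖ * ‖z • x - 𝓔 x‖ := by
    intro x
    have h1 : (algebraMap ℂ (lp (fun _ : ℤ => ℂ) 2 →L[ℂ] lp (fun _ : ℤ => ℂ) 2) z - 𝓔) x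
        = z • x - 𝓔 x := by
      rw [ContinuousLinearMap.sub_apply]
      congr 1
    have h2 : x = V ((algebraMap ℂ
        (lp (fun _ : ℤ => ℂ) 2 →L[ℂ] lp (fun _ : ℤ => ℂ) 2) z - 𝓔) x) := by
      calc x = (1 : lp (fun _ : ℤ => ℂ) 2 →L[ℂ] lp (fun _ : ℤ => ℂ) 2) x := rfl
        _ = ((↑u⁻¹ * ↑u : lp (fun _ : ℤ => ℂ) 2 →L[ℂ] lp (fun _ : ℤ => ℂ) 2)) x := by
            rw [u.inv_mul]
        _ = V ((↑u : lp (fun _ : ℤ => ℂ) 2 →L[ℂ] lp (fun _ : ℤ => ℂ) 2) x) := rfl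
        _ = V ((algebraMap ℂ
            (lp (fun _ : ℤ => ℂ) 2 →L[ℂ] lp (fun _ : ℤ => ℂ) 2) z - 𝓔) x) := by rw [hu]
    calc ‖x‖ = ‖V ((algebraMap ℂ
            (lp (fun _ : ℤ => ℂ) 2 →L[ℂ] lp (fun _ : ℤ => ℂ) 2) z - 𝓔) x)‖ := by rw [← h2]
      _ ≤ ‖V‖ * ‖(algebraMap ℂ
            (lp (fun _ : ℤ => ℂ) 2 →L[ℂ] lp (fun _ : ℤ => ℂ) 2) z - 𝓔) x‖ := V.le_opNorm _
      _ = ‖V‖ * ‖z • x - 𝓔 x‖ := by rw [h1]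
  obtain ⟨R, S, hR, hS, hb⟩ := hpoly
  exact CMVAux.final_contradiction φ hφ0 R S hR hS
    (fun n hn => CMVAux.aSum_upper φ R S hR hb n hn)
    ‖V‖ (norm_nonneg V)
    (fun n hn => CMVAux.key α φ z hα hz heig 𝓔 h𝓔 ‖V‖ (norm_nonneg V) hbound n hn)

end
end
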